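/- Fix T>0, B ∈ ℝ^{n×m}, α ∈ (0,1), and constants 0 < c ≤ C. Suppose A : [0,T] → ℝ^{n×n} and Σ : [0,T] → Sⁿ are of class H¹, Λ : [0,T] → Sⁿ is of class W^{1,1}, cI ≤ Σ_t ≤ CI for all t, and almost everywhere on [0,T]: Σ̇ = AΣ + ΣAᵀ + BBᵀ; −Λ̇ = ΛA + AᵀΛ − (1−α)ȦᵀȦ; the map t ↦ Ȧ_tΣ_t is of class W^{1,1} and ΛΣ = αA − (1−α) d/dt(ȦΣ). Then A is of class W^{2,1}, hence continuously differentiable on [0,T], and Σ is of class W^{3,1}, hence twice continuously differentiable on [0,T]. -/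

import Mathlib

open MeasureTheory Matrix Set

/-- `H¹` class with weak derivative `f'`. -/
def IsH1 {n : ℕ} (T : ℝ) (f f' : ℝ → Matrix (Fin n) (Fin n) ℝ) : Prop :=
  ContinuousOn f (Icc 0 T) ∧
  (∀ i j, MemLp (fun s => f' s i j) 2 (volume.restrict (Icc (0:ℝ) T))) ∧
  ∀ t ∈ Icc (0:ℝ) T, ∀ i j, f t i j = f 0 i j + ∫ s in (0:ℝ)..t, f' s i j

/-- `W^{1,1}` class with weak derivative `f'`. -/
def IsW11 {n : ℕ} (T : ℝ) (f f' : ℝ → Matrix (Fin n) (Fin n) ℝ) : Prop :=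
  ContinuousOn f (Icc 0 T) ∧
  (∀ i j, IntegrableOn (fun s => f' s i j) (Icc (0:ℝ) T)) ∧
  ∀ t ∈ Icc (0:ℝ) T, ∀ i j, f t i j = f 0 i j + ∫ s in (0:ℝ)..t, f' s i j

/-- Loewner order: `P ≤ Q` iff `Q − P` is positive semidefinite. -/
def LoewnerLE {n : ℕ} (P Q : Matrix (Fin n) (Fin n) ℝ) : Prop :=
  (Q - P).PosSemidef


/-- Scalar absolutely continuous function on `[0,T]` with weak derivative `u'`. -/
def ACl (T : ℝ) (u u' : ℝ → ℝ) : Prop :=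
  ContinuousOn u (Icc 0 T) ∧ IntegrableOn u' (Icc 0 T) ∧
  ∀ t ∈ Icc (0:ℝ) T, u t = u 0 + ∫ s in (0:ℝ)..t, u' s

namespace ACl

variable {T : ℝ}

lemma sub_Ioc {t : ℝ} (ht : t ∈ Icc (0:ℝ) T) : Ioc (0:ℝ) t ⊆ Icc (0:ℝ) T :=
  fun x hx => ⟨le_of_lt hx.1, hx.2.trans ht.2⟩

lemma integrable_primitive_mul {f g : ℝ → ℝ}
    (hf : IntegrableOn f (Icc 0 T)) (hg : IntegrableOn g (Icc 0 T))
    {t : ℝ} (ht : t ∈ Icc (0:ℝ) T) :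
    Integrable (fun y => (∫ x in Ioc (0:ℝ) y, f x) * g y)
      (volume.restrict (Ioc (0:ℝ) t)) := by
  have hgμ : Integrable g (volume.restrict (Ioc (0:ℝ) t)) := hg.mono_set (sub_Ioc ht)
  refine hgμ.bdd_mul (c := ∫ x in Icc (0:ℝ) T, ‖f x‖) ?_ ?_
  · exact ((intervalIntegral.continuousOn_primitive hf).mono (sub_Ioc ht)).aestronglyMeasurable
      measurableSet_Ioc
  · filter_upwards [ae_restrict_mem measurableSet_Ioc] with y hy
    calc ‖∫ x in Ioc (0:ℝ) y, f x‖ ≤ ∫ x in Ioc (0:ℝ) y, ‖f x‖ :=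
          norm_integral_le_integral_norm _
      _ ≤ ∫ x in Icc (0:ℝ) T, ‖f x‖ := by
          refine setIntegral_mono_set hf.norm ?_ ?_
          · filter_upwards with x using norm_nonneg _
          · exact HasSubset.Subset.eventuallyLE (sub_Ioc (sub_Ioc ht hy))

/-- Fubini-type key identity. -/
lemma mul_aux {f g : ℝ → ℝ}
    (hf : IntegrableOn f (Icc 0 T)) (hg : IntegrableOn g (Icc 0 T))
    {t : ℝ} (ht : t ∈ Icc (0:ℝ) T) :
    (∫ x in Ioc (0:ℝ) t, f x * ∫ y in Ioc (0:ℝ) x, g y)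
      + ∫ x in Ioc (0:ℝ) t, (∫ y in Ioc (0:ℝ) x, f y) * g x
    = (∫ x in Ioc (0:ℝ) t, f x) * (∫ y in Ioc (0:ℝ) t, g y) := by
  have hsub : Ioc (0:ℝ) t ⊆ Icc (0:ℝ) T := sub_Ioc ht
  set μ := volume.restrict (Ioc (0:ℝ) t) with hμ
  have hfμ : Integrable f μ := hf.mono_set hsub
  have hgμ : Integrable g μ := hg.mono_set hsub
  have hΦ : Integrable (Function.uncurry fun x y => f x * g y) (μ.prod μ) :=
    hfμ.mul_prod hgμ
  have hmeas : MeasurableSet {p : ℝ × ℝ | p.2 ≤ p.1} :=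
    measurableSet_le measurable_snd measurable_fst
  have hΨ : Integrable
      (Function.uncurry fun x y => ({p : ℝ × ℝ | p.2 ≤ p.1}.indicator
        (fun p => f p.1 * g p.2)) (x, y)) (μ.prod μ) := by
    exact hΦ.indicator hmeas
  have swap := integral_integral_swap hΨ
  -- compute the inner integrals on both sides of `swap`
  have hL : ∀ x ∈ Ioc (0:ℝ) t,
      (∫ y, ({p : ℝ × ℝ | p.2 ≤ p.1}.indicator (fun p => f p.1 * g p.2)) (x, y) ∂μ)
        = f x * ∫ y in Ioc (0:ℝ) x, g y := by
    intro x hx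
    have h1 : (fun y => ({p : ℝ × ℝ | p.2 ≤ p.1}.indicator
        (fun p => f p.1 * g p.2)) (x, y))
        = (Iic x).indicator (fun y => f x * g y) := by
      funext y; simp [Set.indicator_apply, Set.mem_Iic]
    rw [h1, integral_indicator measurableSet_Iic, hμ,
      Measure.restrict_restrict measurableSet_Iic]
    have h2 : Iic x ∩ Ioc 0 t = Ioc 0 x := by
      ext y; simp only [mem_inter_iff, mem_Iic, mem_Ioc]
      exact ⟨fun h => ⟨h.2.1, h.1⟩, fun h => ⟨h.2, h.1, h.2.trans hx.2⟩⟩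
    rw [h2, integral_const_mul]
  have hR : ∀ y ∈ Ioc (0:ℝ) t,
      (∫ x, ({p : ℝ × ℝ | p.2 ≤ p.1}.indicator (fun p => f p.1 * g p.2)) (x, y) ∂μ)
        = (∫ x in Ioc y t, f x) * g y := by
    intro y hy
    have h1 : (fun x => ({p : ℝ × ℝ | p.2 ≤ p.1}.indicator
        (fun p => f p.1 * g p.2)) (x, y))
        = (Ici y).indicator (fun x => f x * g y) := by
      funext x; simp [Set.indicator_apply, Set.mem_Ici]
    rw [h1, integral_indicator measurableSet_Ici, hμ,
      Measure.restrict_restrict measurableSet_Ici]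
    have h2 : Ici y ∩ Ioc 0 t = Icc y t := by
      ext x; simp only [mem_inter_iff, mem_Ici, mem_Ioc, mem_Icc]
      exact ⟨fun h => ⟨h.1, h.2.2⟩, fun h => ⟨h.1, lt_of_lt_of_le hy.1 h.1, h.2⟩⟩
    rw [h2, integral_Icc_eq_integral_Ioc, integral_mul_const]
  have hswap2 : (∫ x in Ioc (0:ℝ) t, f x * ∫ y in Ioc (0:ℝ) x, g y)
      = ∫ y in Ioc (0:ℝ) t, (∫ x in Ioc y t, f x) * g y := by
    calc (∫ x in Ioc (0:ℝ) t, f x * ∫ y in Ioc (0:ℝ) x, g y)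
        = ∫ x, (∫ y, ({p : ℝ × ℝ | p.2 ≤ p.1}.indicator
            (fun p => f p.1 * g p.2)) (x, y) ∂μ) ∂μ :=
          (setIntegral_congr_fun measurableSet_Ioc hL).symm
      _ = ∫ y, (∫ x, ({p : ℝ × ℝ | p.2 ≤ p.1}.indicator
            (fun p => f p.1 * g p.2)) (x, y) ∂μ) ∂μ := swap
      _ = ∫ y in Ioc (0:ℝ) t, (∫ x in Ioc y t, f x) * g y :=
          setIntegral_congr_fun measurableSet_Ioc hR
  rw [hswap2]
  -- now combine the two integrals over `y`
  have hint1 : Integrable (fun y => (∫ x in Ioc y t, f x) * g y) μ := by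
    have heq : ∀ y ∈ Ioc (0:ℝ) t, (∫ x in Ioc y t, f x) * g y
        = (∫ x in Ioc (0:ℝ) t, f x) * g y - (∫ x in Ioc (0:ℝ) y, f x) * g y := by
      intro y hy
      have hsplit : (∫ x in Ioc (0:ℝ) y, f x) + (∫ x in Ioc y t, f x)
          = ∫ x in Ioc (0:ℝ) t, f x := by
        rw [← setIntegral_union (Set.Ioc_disjoint_Ioc_of_le le_rfl) measurableSet_Ioc
          (hf.mono_set (sub_Ioc (hsub hy))) (hf.mono_set (fun x hx =>
            hsub ⟨lt_trans hy.1 hx.1, hx.2⟩)),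
          Set.Ioc_union_Ioc_eq_Ioc (le_of_lt hy.1) hy.2]
      rw [← hsplit]; ring
    have : Integrable (fun y => (∫ x in Ioc (0:ℝ) t, f x) * g y
        - (∫ x in Ioc (0:ℝ) y, f x) * g y) μ :=
      ((hgμ.const_mul _)).sub (integrable_primitive_mul hf hg ht)
    exact this.congr <| by
      filter_upwards [ae_restrict_mem measurableSet_Ioc] with y hy using (heq y hy).symm
  have hint2 : Integrable (fun y => (∫ x in Ioc (0:ℝ) y, f x) * g y) μ :=
    integrable_primitive_mul hf hg ht
  rw [← integral_add hint1 hint2]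
  have : ∀ y ∈ Ioc (0:ℝ) t,
      (∫ x in Ioc y t, f x) * g y + (∫ x in Ioc (0:ℝ) y, f x) * g y
        = (∫ x in Ioc (0:ℝ) t, f x) * g y := by
    intro y hy
    have hsplit : (∫ x in Ioc (0:ℝ) y, f x) + (∫ x in Ioc y t, f x)
        = ∫ x in Ioc (0:ℝ) t, f x := by
      rw [← setIntegral_union (Set.Ioc_disjoint_Ioc_of_le le_rfl) measurableSet_Ioc
        (hf.mono_set (sub_Ioc (hsub hy))) (hf.mono_set (fun x hx =>
          hsub ⟨lt_trans hy.1 hx.1, hx.2⟩)),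
        Set.Ioc_union_Ioc_eq_Ioc (le_of_lt hy.1) hy.2]
    rw [← hsplit]; ring
  rw [setIntegral_congr_fun measurableSet_Ioc this, integral_const_mul]

lemma integrable_mul_primitive {f g : ℝ → ℝ}
    (hf : IntegrableOn f (Icc 0 T)) (hg : IntegrableOn g (Icc 0 T))
    {t : ℝ} (ht : t ∈ Icc (0:ℝ) T) :
    Integrable (fun y => g y * ∫ x in Ioc (0:ℝ) y, f x)
      (volume.restrict (Ioc (0:ℝ) t)) :=
  (integrable_primitive_mul hf hg ht).congr
    (Filter.Eventually.of_forall fun y => mul_comm _ _)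

lemma const (T : ℝ) (c : ℝ) : ACl T (fun _ => c) (fun _ => 0) :=
  ⟨continuousOn_const, integrableOn_zero, fun t _ => by simp⟩

lemma add {u u' v v' : ℝ → ℝ} (hu : ACl T u u') (hv : ACl T v v') :
    ACl T (fun t => u t + v t) (fun t => u' t + v' t) := by
  refine ⟨hu.1.add hv.1, (hu.2.1).add hv.2.1, fun t ht => ?_⟩
  show u t + v t = u 0 + v 0 + _
  have h1 := hu.2.2 t ht
  have h2 := hv.2.2 t ht
  have hiu : IntervalIntegrable u' volume 0 t := by
    rw [intervalIntegrable_iff_integrableOn_Ioc_of_le ht.1]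
    exact hu.2.1.mono_set (sub_Ioc ht)
  have hiv : IntervalIntegrable v' volume 0 t := by
    rw [intervalIntegrable_iff_integrableOn_Ioc_of_le ht.1]
    exact hv.2.1.mono_set (sub_Ioc ht)
  rw [intervalIntegral.integral_add hiu hiv]
  rw [h1, h2]; ring

lemma smul (r : ℝ) {u u' : ℝ → ℝ} (hu : ACl T u u') :
    ACl T (fun t => r * u t) (fun t => r * u' t) := by
  refine ⟨continuousOn_const.mul hu.1, hu.2.1.const_mul r, fun t ht => ?_⟩
  show r * u t = r * u 0 + _
  rw [intervalIntegral.integral_const_mul, hu.2.2 t ht]; ring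

lemma sum {ι : Type*} (s : Finset ι) (u u' : ι → ℝ → ℝ)
    (h : ∀ i ∈ s, ACl T (u i) (u' i)) :
    ACl T (fun t => ∑ i ∈ s, u i t) (fun t => ∑ i ∈ s, u' i t) := by
  classical
  induction s using Finset.induction with
  | empty => simpa using const T 0
  | insert a s' hni ih =>
    simp only [Finset.sum_insert hni]
    exact add (h a (Finset.mem_insert_self a s'))
      (ih fun i hi => h i (Finset.mem_insert_of_mem hi))

lemma mul {u u' v v' : ℝ → ℝ} (hu : ACl T u u') (hv : ACl T v v') :
    ACl T (fun t => u t * v t) (fun t => u' t * v t + u t * v' t) := by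
  obtain ⟨huc, hui, huf⟩ := hu
  obtain ⟨hvc, hvi, hvf⟩ := hv
  obtain ⟨Cv, hCv⟩ := isCompact_Icc.exists_bound_of_continuousOn hvc
  obtain ⟨Cu, hCu⟩ := isCompact_Icc.exists_bound_of_continuousOn huc
  have hAu : AEStronglyMeasurable u (volume.restrict (Icc (0:ℝ) T)) :=
    huc.aestronglyMeasurable measurableSet_Icc
  have hAv : AEStronglyMeasurable v (volume.restrict (Icc (0:ℝ) T)) :=
    hvc.aestronglyMeasurable measurableSet_Icc
  have hbu : ∀ᵐ x ∂(volume.restrict (Icc (0:ℝ) T)), ‖u x‖ ≤ Cu := by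
    filter_upwards [ae_restrict_mem measurableSet_Icc] with x hx using hCu x hx
  have hbv : ∀ᵐ x ∂(volume.restrict (Icc (0:ℝ) T)), ‖v x‖ ≤ Cv := by
    filter_upwards [ae_restrict_mem measurableSet_Icc] with x hx using hCv x hx
  have hi1 : IntegrableOn (fun x => u' x * v x) (Icc 0 T) :=
    (hui.bdd_mul hAv hbv).congr (Filter.Eventually.of_forall fun y => mul_comm _ _)
  have hi2 : IntegrableOn (fun x => u x * v' x) (Icc 0 T) :=
    hvi.bdd_mul hAu hbu
  refine ⟨huc.mul hvc, hi1.add hi2, fun t ht => ?_⟩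
  have ht0 : (0:ℝ) ≤ t := ht.1
  show u t * v t = u 0 * v 0 + _
  rw [intervalIntegral.integral_of_le ht0]
  have key := mul_aux hui hvi ht
  have hcong : ∀ x ∈ Ioc (0:ℝ) t, u' x * v x + u x * v' x
      = (v 0 * u' x + u' x * ∫ y in Ioc (0:ℝ) x, v' y)
        + (u 0 * v' x + (∫ y in Ioc (0:ℝ) x, u' y) * v' x) := by
    intro x hx
    have hx' : x ∈ Icc (0:ℝ) T := sub_Ioc ht hx
    have hux : u x = u 0 + ∫ y in Ioc (0:ℝ) x, u' y := by
      rw [huf x hx', intervalIntegral.integral_of_le (le_of_lt hx.1)]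
    have hvx : v x = v 0 + ∫ y in Ioc (0:ℝ) x, v' y := by
      rw [hvf x hx', intervalIntegral.integral_of_le (le_of_lt hx.1)]
    rw [hux, hvx]; ring
  rw [setIntegral_congr_fun measurableSet_Ioc hcong]
  have ha1 : Integrable (fun x => v 0 * u' x) (volume.restrict (Ioc (0:ℝ) t)) :=
    (hui.mono_set (sub_Ioc ht)).const_mul _
  have ha2 : Integrable (fun x => u' x * ∫ y in Ioc (0:ℝ) x, v' y)
      (volume.restrict (Ioc (0:ℝ) t)) := integrable_mul_primitive hvi hui ht
  have ha3 : Integrable (fun x => u 0 * v' x) (volume.restrict (Ioc (0:ℝ) t)) :=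
    (hvi.mono_set (sub_Ioc ht)).const_mul _
  have ha4 : Integrable (fun x => (∫ y in Ioc (0:ℝ) x, u' y) * v' x)
      (volume.restrict (Ioc (0:ℝ) t)) := integrable_primitive_mul hui hvi ht
  have ha12 : Integrable (fun x => v 0 * u' x + u' x * ∫ y in Ioc (0:ℝ) x, v' y)
      (volume.restrict (Ioc (0:ℝ) t)) := ha1.add ha2
  have ha34 : Integrable (fun x => u 0 * v' x + (∫ y in Ioc (0:ℝ) x, u' y) * v' x)
      (volume.restrict (Ioc (0:ℝ) t)) := ha3.add ha4
  rw [integral_add ha12 ha34, integral_add ha1 ha2,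
    integral_add ha3 ha4, integral_const_mul, integral_const_mul]
  have hut : u t = u 0 + ∫ y in Ioc (0:ℝ) t, u' y := by
    rw [huf t ht, intervalIntegral.integral_of_le ht0]
  have hvt : v t = v 0 + ∫ y in Ioc (0:ℝ) t, v' y := by
    rw [hvf t ht, intervalIntegral.integral_of_le ht0]
  rw [hut, hvt]
  linear_combination -key

lemma congr_deriv {u u' v' : ℝ → ℝ} (h : ACl T u u')
    (hv : IntegrableOn v' (Icc 0 T))
    (he : u' =ᵐ[volume.restrict (Icc (0:ℝ) T)] v') : ACl T u v' := by
  refine ⟨h.1, hv, fun t ht => ?_⟩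
  rw [h.2.2 t ht, intervalIntegral.integral_of_le ht.1,
    intervalIntegral.integral_of_le ht.1]
  congr 1
  exact setIntegral_congr_ae measurableSet_Ioc
    (ae_imp_of_ae_restrict (ae_restrict_of_ae_restrict_of_subset (sub_Ioc ht) he))

lemma primitive {p : ℝ → ℝ} (hp : IntegrableOn p (Icc 0 T)) (c : ℝ) :
    ACl T (fun t => c + ∫ s in (0:ℝ)..t, p s) p := by
  refine ⟨?_, hp, fun t ht => by simp⟩
  refine continuousOn_const.add ?_
  refine (intervalIntegral.continuousOn_primitive hp).congr fun x hx => ?_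
  rw [intervalIntegral.integral_of_le hx.1]

lemma of_eq {u u' v v' : ℝ → ℝ} (h : ACl T u u') (h1 : u = v) (h2 : u' = v') :
    ACl T v v' := h1 ▸ h2 ▸ h

end ACl

section Gronwall

variable {T : ℝ}

open ACl in
/-- Grönwall-type lemma with `L¹` kernel. -/
lemma gronwall_zero {k H : ℝ → ℝ} (hk : IntegrableOn k (Icc 0 T))
    (hk0 : ∀ s ∈ Icc (0:ℝ) T, 0 ≤ k s)
    (hH : ContinuousOn H (Icc 0 T)) (hH0 : ∀ t ∈ Icc (0:ℝ) T, 0 ≤ H t)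
    (hineq : ∀ t ∈ Icc (0:ℝ) T, H t ≤ ∫ s in Ioc (0:ℝ) t, k s * H s) :
    ∀ t ∈ Icc (0:ℝ) T, H t = 0 := by
  set Kc : ℝ → ℝ := fun t => (0:ℝ) + ∫ s in (0:ℝ)..t, k s with hKc
  have hK : ACl T Kc k := ACl.primitive hk 0
  have hK0 : Kc 0 = 0 := by simp [hKc]
  -- powers of the primitive
  have hpow : ∀ N : ℕ, ACl T (fun t => Kc t ^ (N + 1))
      (fun t => ((N:ℝ) + 1) * (k t * Kc t ^ N)) := by
    intro N
    induction N with
    | zero =>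
      refine hK.of_eq (funext fun t => ?_) (funext fun t => ?_) <;> ring
    | succ N ih =>
      refine (hK.mul ih).of_eq (funext fun t => ?_) (funext fun t => ?_) <;>
        push_cast <;> ring
  have hIN : ∀ (N : ℕ), ∀ t ∈ Icc (0:ℝ) T,
      ∫ s in Ioc (0:ℝ) t, k s * Kc s ^ N = Kc t ^ (N + 1) / ((N:ℝ) + 1) := by
    intro N t ht
    have := (hpow N).2.2 t ht
    simp only at this
    rw [intervalIntegral.integral_of_le ht.1] at this
    rw [integral_const_mul] at this
    have hN1 : ((N:ℝ) + 1) ≠ 0 := by positivity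
    have h0 : Kc 0 ^ (N + 1) = 0 := by rw [hK0]; simp
    rw [h0, zero_add] at this
    field_simp [this]
    linear_combination -this
  obtain ⟨M, hM⟩ := isCompact_Icc.exists_bound_of_continuousOn hH
  have hKcont : ContinuousOn Kc (Icc 0 T) := hK.1
  have hHb : ∀ x ∈ Icc (0:ℝ) T, H x ≤ M := fun x hx => (le_abs_self _).trans
    (by simpa [Real.norm_eq_abs] using hM x hx)
  have hKnn : ∀ t ∈ Icc (0:ℝ) T, 0 ≤ Kc t := by
    intro t ht
    have : (0:ℝ) ≤ ∫ s in Ioc (0:ℝ) t, k s :=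
      setIntegral_nonneg measurableSet_Ioc fun s hs => hk0 s (sub_Ioc ht hs)
    simpa [hKc, intervalIntegral.integral_of_le ht.1] using this
  -- integrability facts
  have hAESM_H : AEStronglyMeasurable H (volume.restrict (Icc (0:ℝ) T)) :=
    hH.aestronglyMeasurable measurableSet_Icc
  have hkH : IntegrableOn (fun s => k s * H s) (Icc 0 T) := by
    refine ((hk.bdd_mul (c := M) hAESM_H ?_).congr
      (Filter.Eventually.of_forall fun y => mul_comm _ _))
    filter_upwards [ae_restrict_mem measurableSet_Icc] with x hx
    rw [Real.norm_eq_abs, abs_of_nonneg (hH0 x hx)]; exact hHb x hx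
  have hkKN : ∀ N : ℕ, IntegrableOn (fun s => k s * Kc s ^ N) (Icc 0 T) := by
    intro N
    obtain ⟨MK, hMK⟩ := isCompact_Icc.exists_bound_of_continuousOn
      ((hKcont.pow N) : ContinuousOn (fun t => Kc t ^ N) (Icc 0 T))
    refine ((hk.bdd_mul (c := MK)
      (((hKcont.pow N)).aestronglyMeasurable measurableSet_Icc) ?_).congr
      (Filter.Eventually.of_forall fun y => mul_comm _ _))
    filter_upwards [ae_restrict_mem measurableSet_Icc] with x hx using hMK x hx
  -- the iterated bound
  have main : ∀ N : ℕ, ∀ t ∈ Icc (0:ℝ) T,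
      H t ≤ M * Kc t ^ N / (N.factorial : ℝ) := by
    intro N
    induction N with
    | zero => intro t ht; simpa using hHb t ht
    | succ N ih =>
      intro t ht
      have h1 : H t ≤ ∫ s in Ioc (0:ℝ) t, k s * H s := hineq t ht
      have h2 : ∫ s in Ioc (0:ℝ) t, k s * H s
          ≤ ∫ s in Ioc (0:ℝ) t, (M / (N.factorial : ℝ)) * (k s * Kc s ^ N) := by
        refine setIntegral_mono_on (hkH.mono_set (sub_Ioc ht))
          (((hkKN N).mono_set (sub_Ioc ht)).const_mul _) measurableSet_Ioc ?_
        intro s hs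
        have hs' := sub_Ioc ht hs
        have := mul_le_mul_of_nonneg_left (ih s hs') (hk0 s hs')
        calc k s * H s ≤ k s * (M * Kc s ^ N / (N.factorial : ℝ)) := this
          _ = (M / (N.factorial : ℝ)) * (k s * Kc s ^ N) := by ring
      rw [integral_const_mul, hIN N t ht] at h2
      have hfac : ((N+1).factorial : ℝ) = ((N:ℝ)+1) * (N.factorial : ℝ) := by
        rw [Nat.factorial_succ]; push_cast; ring
      calc H t ≤ M / (N.factorial : ℝ) * (Kc t ^ (N + 1) / ((N:ℝ) + 1)) :=
            h1.trans h2
        _ = M * Kc t ^ (N+1) / (((N+1).factorial : ℝ)) := by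
            have hne1 : ((N:ℝ) + 1) ≠ 0 := by positivity
            have hne2 : ((N.factorial : ℝ)) ≠ 0 := by positivity
            rw [hfac]
            field_simp
            try ring
            try exact Or.inl trivial
  -- conclude
  intro t ht
  refine le_antisymm ?_ (hH0 t ht)
  have htend : Filter.Tendsto (fun N : ℕ => M * Kc t ^ N / (N.factorial : ℝ))
      Filter.atTop (nhds 0) := by
    have := FloorSemiring.tendsto_pow_div_factorial_atTop (Kc t)
    have h2 := this.const_mul M
    simpa [mul_div_assoc] using h2
  exact ge_of_tendsto htend (Filter.Eventually.of_forall fun N => main N t ht)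

end Gronwall

section MatrixLayer

variable {n : ℕ} {T : ℝ}

/-- Entrywise absolute continuity for matrix-valued functions. -/
def MAC (T : ℝ) (f f' : ℝ → Matrix (Fin n) (Fin n) ℝ) : Prop :=
  ∀ i j, ACl T (fun t => f t i j) (fun t => f' t i j)

lemma continuousOn_matrix {f : ℝ → Matrix (Fin n) (Fin n) ℝ} {s : Set ℝ}
    (h : ∀ i j, ContinuousOn (fun t => f t i j) s) : ContinuousOn f s := by
  refine continuousOn_pi.2 fun i => continuousOn_pi.2 fun j => h i j

lemma ContinuousOn.matrix_entry {f : ℝ → Matrix (Fin n) (Fin n) ℝ} {s : Set ℝ}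
    (h : ContinuousOn f s) (i j : Fin n) : ContinuousOn (fun t => f t i j) s := by
  have := ((continuous_apply j).comp (continuous_apply i)).comp_continuousOn h
  exact this

lemma MAC.isW11 {f f' : ℝ → Matrix (Fin n) (Fin n) ℝ} (h : MAC T f f') :
    IsW11 T f f' :=
  ⟨continuousOn_matrix fun i j => (h i j).1, fun i j => (h i j).2.1,
    fun t ht i j => (h i j).2.2 t ht⟩

lemma IsW11.mac {f f' : ℝ → Matrix (Fin n) (Fin n) ℝ} (h : IsW11 T f f') :
    MAC T f f' := fun i j =>
  ⟨h.1.matrix_entry i j, h.2.1 i j, fun t ht => h.2.2 t ht i j⟩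

namespace MAC

variable {f f' g g' : ℝ → Matrix (Fin n) (Fin n) ℝ}

lemma add (hf : MAC T f f') (hg : MAC T g g') :
    MAC T (fun t => f t + g t) (fun t => f' t + g' t) := fun i j =>
  ((hf i j).add (hg i j)).of_eq (funext fun t => rfl) (funext fun t => rfl)

lemma neg (hf : MAC T f f') : MAC T (fun t => -(f t)) (fun t => -(f' t)) :=
  fun i j => (((hf i j).smul (-1)).of_eq (funext fun t => by
      simp [Matrix.neg_apply])
    (funext fun t => by simp [Matrix.neg_apply]))

lemma sub (hf : MAC T f f') (hg : MAC T g g') :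
    MAC T (fun t => f t - g t) (fun t => f' t - g' t) := by
  have := hf.add hg.neg
  refine fun i j => (this i j).of_eq (funext fun t => by
      simp [sub_eq_add_neg, Matrix.sub_apply, Matrix.add_apply, Matrix.neg_apply])
    (funext fun t => by
      simp [sub_eq_add_neg, Matrix.sub_apply, Matrix.add_apply, Matrix.neg_apply])

lemma const (M : Matrix (Fin n) (Fin n) ℝ) :
    MAC T (fun _ => M) (fun _ => (0 : Matrix (Fin n) (Fin n) ℝ)) := fun i j =>
  (ACl.const T (M i j)).of_eq rfl (funext fun t => by simp [Matrix.zero_apply])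

lemma smulc (r : ℝ) (hf : MAC T f f') :
    MAC T (fun t => r • f t) (fun t => r • f' t) := fun i j =>
  ((hf i j).smul r).of_eq (funext fun t => by simp [Matrix.smul_apply])
    (funext fun t => by simp [Matrix.smul_apply])

lemma transpose (hf : MAC T f f') :
    MAC T (fun t => (f t)ᵀ) (fun t => (f' t)ᵀ) := fun i j =>
  (hf j i).of_eq (funext fun t => rfl) (funext fun t => rfl)

lemma mul (hf : MAC T f f') (hg : MAC T g g') :
    MAC T (fun t => f t * g t) (fun t => f' t * g t + f t * g' t) := by
  intro i j
  have hsum := ACl.sum (T := T) Finset.univ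
    (fun k => fun t => f t i k * g t k j)
    (fun k => fun t => f' t i k * g t k j + f t i k * g' t k j)
    (fun k _ => (hf i k).mul (hg k j))
  refine hsum.of_eq (funext fun t => ?_) (funext fun t => ?_)
  · simp [Matrix.mul_apply]
  · simp [Matrix.mul_apply, Matrix.add_apply, Finset.sum_add_distrib]

lemma congr_deriv {h' : ℝ → Matrix (Fin n) (Fin n) ℝ} (hf : MAC T f f')
    (hi : ∀ i j, IntegrableOn (fun t => h' t i j) (Icc 0 T))
    (he : ∀ᵐ t ∂(volume.restrict (Icc (0:ℝ) T)), f' t = h' t) : MAC T f h' :=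
  fun i j => (hf i j).congr_deriv (hi i j)
    (by filter_upwards [he] with t ht using by rw [ht])

end MAC

/-- The primitive of a matrix-valued integrable function. -/
noncomputable def mprim (M0 : Matrix (Fin n) (Fin n) ℝ)
    (h : ℝ → Matrix (Fin n) (Fin n) ℝ) : ℝ → Matrix (Fin n) (Fin n) ℝ :=
  fun t => Matrix.of fun i j => M0 i j + ∫ s in (0:ℝ)..t, h s i j

lemma MAC.mprim {M0 : Matrix (Fin n) (Fin n) ℝ}
    {h : ℝ → Matrix (Fin n) (Fin n) ℝ}
    (hi : ∀ i j, IntegrableOn (fun t => h t i j) (Icc 0 T)) :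
    MAC T (_root_.mprim M0 h) h := fun i j =>
  (ACl.primitive (hi i j) (M0 i j)).of_eq (funext fun t => rfl) rfl

end MatrixLayer

section Helpers

variable {n : ℕ} {T : ℝ}

/-- Sum of absolute values of all entries. -/
def entSum (M : Matrix (Fin n) (Fin n) ℝ) : ℝ := ∑ i, ∑ j, |M i j|

lemma entSum_nonneg (M : Matrix (Fin n) (Fin n) ℝ) : 0 ≤ entSum M :=
  Finset.sum_nonneg fun i _ => Finset.sum_nonneg fun j _ => abs_nonneg _

lemma entry_abs_le_entSum (M : Matrix (Fin n) (Fin n) ℝ) (i j : Fin n) :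
    |M i j| ≤ entSum M := by
  calc |M i j| ≤ ∑ j', |M i j'| :=
        Finset.single_le_sum (f := fun j' => |M i j'|)
          (fun j' _ => abs_nonneg _) (Finset.mem_univ j)
    _ ≤ entSum M :=
        Finset.single_le_sum (f := fun i' => ∑ j', |M i' j'|)
          (fun i' _ => Finset.sum_nonneg fun j' _ => abs_nonneg _) (Finset.mem_univ i)

lemma eq_zero_of_entSum (M : Matrix (Fin n) (Fin n) ℝ) (h : entSum M = 0) :
    M = 0 := by
  ext i j
  have := entry_abs_le_entSum M i j
  rw [h] at this
  simpa using le_antisymm this (abs_nonneg _)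

lemma entSum_mul_le (X Y : Matrix (Fin n) (Fin n) ℝ) :
    entSum (X * Y) ≤ entSum X * entSum Y := by
  have h1 : entSum (X * Y) ≤ ∑ i, ∑ j, ∑ k, |X i k| * |Y k j| := by
    refine Finset.sum_le_sum fun i _ => Finset.sum_le_sum fun j _ => ?_
    rw [Matrix.mul_apply]
    exact (Finset.abs_sum_le_sum_abs _ _).trans
      (le_of_eq (Finset.sum_congr rfl fun k _ => abs_mul _ _))
  refine h1.trans ?_
  have h2 : ∀ i : Fin n, ∑ j, ∑ k, |X i k| * |Y k j|
      = ∑ k, |X i k| * ∑ j, |Y k j| := by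
    intro i
    rw [Finset.sum_comm]
    exact Finset.sum_congr rfl fun k _ => by rw [← Finset.mul_sum]
  calc ∑ i, ∑ j, ∑ k, |X i k| * |Y k j| = ∑ i, ∑ k, |X i k| * ∑ j, |Y k j| :=
        Finset.sum_congr rfl fun i _ => h2 i
    _ ≤ ∑ i, ∑ k, |X i k| * entSum Y := by
        refine Finset.sum_le_sum fun i _ => Finset.sum_le_sum fun k _ => ?_
        refine mul_le_mul_of_nonneg_left ?_ (abs_nonneg _)
        exact Finset.single_le_sum (f := fun k' => ∑ j, |Y k' j|)
          (fun k' _ => Finset.sum_nonneg fun j _ => abs_nonneg _) (Finset.mem_univ k)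
    _ = entSum X * entSum Y := by
        unfold entSum
        rw [Finset.sum_mul]
        exact Finset.sum_congr rfl fun i _ => by rw [Finset.sum_mul]

lemma continuousOn_entSum {f : ℝ → Matrix (Fin n) (Fin n) ℝ} {s : Set ℝ}
    (hf : ContinuousOn f s) : ContinuousOn (fun t => entSum (f t)) s := by
  unfold entSum
  refine continuousOn_finset_sum _ fun i _ => continuousOn_finset_sum _ fun j _ => ?_
  exact (hf.matrix_entry i j).abs

lemma posDef_of_loewner {c : ℝ} (hc : 0 < c) {M : Matrix (Fin n) (Fin n) ℝ}
    (hsym : M.IsSymm) (h : LoewnerLE (c • (1 : Matrix (Fin n) (Fin n) ℝ)) M) :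
    M.PosDef := by
  have h1 : (c • (1 : Matrix (Fin n) (Fin n) ℝ)).PosDef := by
    exact Matrix.PosDef.one.smul hc
  have h2 := h1.add_posSemidef h
  rwa [add_sub_cancel] at h2

section C1C2

/-- clamp to `[0,T]`. -/
noncomputable def clampT (T s : ℝ) : ℝ := max 0 (min s T)

lemma clampT_continuous : Continuous (clampT T) :=
  continuous_const.max (continuous_id.min continuous_const)

lemma clampT_mem (hT : 0 ≤ T) (s : ℝ) : clampT T s ∈ Icc (0:ℝ) T :=
  ⟨le_max_left _ _, max_le hT (min_le_right _ _)⟩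

lemma clampT_eq {s : ℝ} (hs : s ∈ Icc (0:ℝ) T) : clampT T s = s := by
  unfold clampT
  rw [min_eq_left hs.2, max_eq_right hs.1]

lemma hasDerivAt_prim {q : ℝ → ℝ} (hq : Continuous q) (c t : ℝ) :
    HasDerivAt (fun x => c + ∫ s in (0:ℝ)..x, q s) (q t) t := by
  have h := intervalIntegral.integral_hasDerivAt_right
    (hq.intervalIntegrable 0 t)
    (hq.stronglyMeasurable.stronglyMeasurableAtFilter)
    hq.continuousAt
  exact h.const_add c

lemma c1_of_prim (hT : 0 ≤ T) {u p : ℝ → ℝ} (hp : ContinuousOn p (Icc 0 T))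
    (hu : ∀ t ∈ Icc (0:ℝ) T, u t = u 0 + ∫ s in (0:ℝ)..t, p s) :
    ContDiffOn ℝ 1 u (Icc 0 T) := by
  set q : ℝ → ℝ := fun s => p (clampT T s) with hqdef
  have hqc : Continuous q := hp.comp_continuous clampT_continuous (clampT_mem hT)
  set F : ℝ → ℝ := fun x => u 0 + ∫ s in (0:ℝ)..x, q s with hFdef
  have hd : ∀ t, HasDerivAt F (q t) t := fun t => hasDerivAt_prim hqc _ t
  have hF1 : ContDiff ℝ 1 F := by
    rw [contDiff_one_iff_deriv]
    exact ⟨fun t => (hd t).differentiableAt,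
      by rw [funext fun t => (hd t).deriv]; exact hqc⟩
  refine hF1.contDiffOn.congr ?_
  intro t ht
  rw [hu t ht, hFdef]
  simp only
  congr 1
  refine (intervalIntegral.integral_congr ?_).symm
  intro s hs
  rw [Set.uIcc_of_le ht.1] at hs
  have hs' : s ∈ Icc (0:ℝ) T := ⟨hs.1, hs.2.trans ht.2⟩
  rw [hqdef]
  simp only
  rw [clampT_eq hs']

lemma c2_of_prim (hT : 0 ≤ T) {u p r : ℝ → ℝ} (hr : ContinuousOn r (Icc 0 T))
    (hpr : ∀ t ∈ Icc (0:ℝ) T, p t = p 0 + ∫ s in (0:ℝ)..t, r s)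
    (hu : ∀ t ∈ Icc (0:ℝ) T, u t = u 0 + ∫ s in (0:ℝ)..t, p s) :
    ContDiffOn ℝ 2 u (Icc 0 T) := by
  set r2 : ℝ → ℝ := fun s => r (clampT T s) with hr2def
  have hr2c : Continuous r2 := hr.comp_continuous clampT_continuous (clampT_mem hT)
  set p2 : ℝ → ℝ := fun x => p 0 + ∫ s in (0:ℝ)..x, r2 s with hp2def
  have hp2d : ∀ t, HasDerivAt p2 (r2 t) t := fun t => hasDerivAt_prim hr2c _ t
  have hp2c : Continuous p2 := by
    refine continuous_const.add ?_
    exact intervalIntegral.continuous_primitive (fun a b => hr2c.intervalIntegrable a b) 0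
  have hp2c1 : ContDiff ℝ 1 p2 := by
    rw [contDiff_one_iff_deriv]
    exact ⟨fun t => (hp2d t).differentiableAt,
      by rw [funext fun t => (hp2d t).deriv]; exact hr2c⟩
  have hp2eq : ∀ s ∈ Icc (0:ℝ) T, p2 s = p s := by
    intro s hs
    rw [hp2def]
    simp only
    rw [hpr s hs]
    congr 1
    refine intervalIntegral.integral_congr ?_
    intro x hx
    rw [Set.uIcc_of_le hs.1] at hx
    have hx' : x ∈ Icc (0:ℝ) T := ⟨hx.1, hx.2.trans hs.2⟩
    rw [hr2def]
    simp only
    rw [clampT_eq hx']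
  set F : ℝ → ℝ := fun x => u 0 + ∫ s in (0:ℝ)..x, p2 s with hFdef
  have hFd : ∀ t, HasDerivAt F (p2 t) t := fun t => hasDerivAt_prim hp2c _ t
  have hF2 : ContDiff ℝ 2 F := by
    rw [show (2 : WithTop ℕ∞) = 1 + 1 from by norm_num, contDiff_succ_iff_deriv]
    refine ⟨fun t => (hFd t).differentiableAt, by simp, ?_⟩
    rw [funext fun t => (hFd t).deriv]
    exact_mod_cast hp2c1
  refine hF2.contDiffOn.congr ?_
  intro t ht
  rw [hu t ht, hFdef]
  simp only
  congr 1
  refine (intervalIntegral.integral_congr ?_).symm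
  intro s hs
  rw [Set.uIcc_of_le ht.1] at hs
  exact hp2eq s ⟨hs.1, hs.2.trans ht.2⟩

end C1C2

end Helpers

section MHelpers

variable {n : ℕ} {T : ℝ}

lemma continuousOn_matrix_mul {f g : ℝ → Matrix (Fin n) (Fin n) ℝ} {s : Set ℝ}
    (hf : ContinuousOn f s) (hg : ContinuousOn g s) :
    ContinuousOn (fun t => f t * g t) s := by
  refine continuousOn_matrix fun i j => ?_
  have he : (fun t => (f t * g t) i j) = fun t => ∑ k, f t i k * g t k j :=
    funext fun t => Matrix.mul_apply
  rw [he]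
  exact continuousOn_finset_sum _ fun k _ =>
    (hf.matrix_entry i k).mul (hg.matrix_entry k j)

lemma continuousOn_matrix_transpose {f : ℝ → Matrix (Fin n) (Fin n) ℝ} {s : Set ℝ}
    (hf : ContinuousOn f s) : ContinuousOn (fun t => (f t)ᵀ) s :=
  continuousOn_matrix fun i j => hf.matrix_entry j i

lemma integrableOn_matrix_mul_cont {M N : ℝ → Matrix (Fin n) (Fin n) ℝ}
    (hM : ∀ i j, IntegrableOn (fun t => M t i j) (Icc (0:ℝ) T))
    (hN : ContinuousOn N (Icc 0 T)) :
    ∀ i j, IntegrableOn (fun t => (M t * N t) i j) (Icc (0:ℝ) T) := by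
  intro i j
  have he : (fun t => (M t * N t) i j) = fun t => ∑ k, M t i k * N t k j :=
    funext fun t => Matrix.mul_apply
  rw [he]
  refine integrable_finset_sum _ fun k _ => ?_
  obtain ⟨Cb, hCb⟩ := isCompact_Icc.exists_bound_of_continuousOn (hN.matrix_entry k j)
  refine ((hM i k).bdd_mul (c := Cb)
    ((hN.matrix_entry k j).aestronglyMeasurable measurableSet_Icc) ?_).congr
    (Filter.Eventually.of_forall fun y => mul_comm _ _)
  filter_upwards [ae_restrict_mem measurableSet_Icc] with x hx using hCb x hx

lemma integrableOn_cont_mul_matrix {M N : ℝ → Matrix (Fin n) (Fin n) ℝ}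
    (hM : ContinuousOn M (Icc (0:ℝ) T))
    (hN : ∀ i j, IntegrableOn (fun t => N t i j) (Icc (0:ℝ) T)) :
    ∀ i j, IntegrableOn (fun t => (M t * N t) i j) (Icc (0:ℝ) T) := by
  intro i j
  have he : (fun t => (M t * N t) i j) = fun t => ∑ k, M t i k * N t k j :=
    funext fun t => Matrix.mul_apply
  rw [he]
  refine integrable_finset_sum _ fun k _ => ?_
  obtain ⟨Cb, hCb⟩ := isCompact_Icc.exists_bound_of_continuousOn (hM.matrix_entry i k)
  refine (hN k j).bdd_mul (c := Cb)
    ((hM.matrix_entry i k).aestronglyMeasurable measurableSet_Icc) ?_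
  filter_upwards [ae_restrict_mem measurableSet_Icc] with x hx using hCb x hx

lemma continuousOn_inv_matrix {S : ℝ → Matrix (Fin n) (Fin n) ℝ} {s : Set ℝ}
    (hS : ContinuousOn S s) (hdet : ∀ t ∈ s, (S t).det ≠ 0) :
    ContinuousOn (fun t => (S t)⁻¹) s := by
  have h1 : ContinuousOn (fun t => (S t).det) s :=
    (continuous_id.matrix_det).comp_continuousOn hS
  have h2 : ContinuousOn (fun t => ((S t).det)⁻¹) s := h1.inv₀ hdet
  have h3 : ContinuousOn (fun t => (S t).adjugate) s :=
    (continuous_id.matrix_adjugate).comp_continuousOn hS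
  refine (h2.smul h3).congr fun t ht => ?_
  rw [Matrix.inv_def, Ring.inverse_eq_inv]
  rfl

end MHelpers


/-- regularity upgrade from the first-order necessary conditions.
If `(A,Σ,Λ)` satisfy the primal, adjoint, and stationarity equations with uniform
spectral bounds `cI ≤ Σ ≤ CI`, then `A ∈ W^{2,1}` (hence `C¹` on `[0,T]`) and
`Σ ∈ W^{3,1}` (hence `C²` on `[0,T]`), in the sense that their weak derivatives admit
representatives of the corresponding Sobolev classes. -/
theorem regularity_upgrade
    {n m : ℕ} (T α c C : ℝ) (hT : 0 < T) (hα : α ∈ Set.Ioo (0:ℝ) 1)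
    (hc : 0 < c) (hcC : c ≤ C)
    (B : Matrix (Fin n) (Fin m) ℝ)
    (A A' S S' Lam Lam' G G' : ℝ → Matrix (Fin n) (Fin n) ℝ)
    (hA : IsH1 T A A') (hS : IsH1 T S S')
    (hSsymm : ∀ t ∈ Icc (0:ℝ) T, (S t).IsSymm)
    (hLam : IsW11 T Lam Lam')
    (hLamSymm : ∀ t ∈ Icc (0:ℝ) T, (Lam t).IsSymm)
    (hbounds : ∀ t ∈ Icc (0:ℝ) T,
      LoewnerLE (c • (1 : Matrix (Fin n) (Fin n) ℝ)) (S t) ∧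
      LoewnerLE (S t) (C • (1 : Matrix (Fin n) (Fin n) ℝ)))
    (hdyn : ∀ᵐ t ∂(volume.restrict (Icc (0:ℝ) T)),
      S' t = A t * S t + S t * (A t)ᵀ + B * Bᵀ)
    (hadj : ∀ᵐ t ∂(volume.restrict (Icc (0:ℝ) T)),
      -(Lam' t) = Lam t * A t + (A t)ᵀ * Lam t - (1 - α) • ((A' t)ᵀ * A' t))
    (hG : ∀ᵐ t ∂(volume.restrict (Icc (0:ℝ) T)), G t = A' t * S t)
    (hGW11 : IsW11 T G G')
    (hstat : ∀ᵐ t ∂(volume.restrict (Icc (0:ℝ) T)),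
      Lam t * S t = α • A t - (1 - α) • G' t) :
    -- A ∈ W^{2,1}, hence C¹ on [0,T]
    (∃ A1 A2 : ℝ → Matrix (Fin n) (Fin n) ℝ,
      (∀ᵐ t ∂(volume.restrict (Icc (0:ℝ) T)), A1 t = A' t) ∧
      IsW11 T A A1 ∧ IsW11 T A1 A2 ∧
      (∀ i j, ContDiffOn ℝ 1 (fun t => A t i j) (Icc (0:ℝ) T))) ∧
    -- Σ ∈ W^{3,1}, hence C² on [0,T]
    (∃ S1 S2 S3 : ℝ → Matrix (Fin n) (Fin n) ℝ,
      (∀ᵐ t ∂(volume.restrict (Icc (0:ℝ) T)), S1 t = S' t) ∧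
      IsW11 T S S1 ∧ IsW11 T S1 S2 ∧ IsW11 T S2 S3 ∧
      (∀ i j, ContDiffOn ℝ 2 (fun t => S t i j) (Icc (0:ℝ) T))) := by
  classical
  have hT0 : (0:ℝ) ≤ T := hT.le
  have h0T : (0:ℝ) ∈ Icc (0:ℝ) T := ⟨le_rfl, hT0⟩
  haveI : IsFiniteMeasure (volume.restrict (Icc (0:ℝ) T)) := by
    constructor
    rw [Measure.restrict_apply_univ]
    exact measure_Icc_lt_top
  have hSint : ∀ i j, IntegrableOn (fun s => S' s i j) (Icc (0:ℝ) T) :=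
    fun i j => (hS.2.1 i j).integrable (by norm_num)
  have hAint : ∀ i j, IntegrableOn (fun s => A' s i j) (Icc (0:ℝ) T) :=
    fun i j => (hA.2.1 i j).integrable (by norm_num)
  have hSW : MAC T S S' := IsW11.mac ⟨hS.1, hSint, hS.2.2⟩
  have hAW : MAC T A A' := IsW11.mac ⟨hA.1, hAint, hA.2.2⟩
  have hGW : MAC T G G' := hGW11.mac
  -- invertibility of S
  have hpos : ∀ t ∈ Icc (0:ℝ) T, (S t).PosDef :=
    fun t ht => posDef_of_loewner hc (hSsymm t ht) (hbounds t ht).1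
  have hdet : ∀ t ∈ Icc (0:ℝ) T, IsUnit (S t).det :=
    fun t ht => isUnit_iff_ne_zero.2 (hpos t ht).det_pos.ne'
  have hSSi : ∀ t ∈ Icc (0:ℝ) T, S t * (S t)⁻¹ = 1 :=
    fun t ht => Matrix.mul_nonsing_inv _ (hdet t ht)
  have hSiS : ∀ t ∈ Icc (0:ℝ) T, (S t)⁻¹ * S t = 1 :=
    fun t ht => Matrix.nonsing_inv_mul _ (hdet t ht)
  set Si : ℝ → Matrix (Fin n) (Fin n) ℝ := fun t => (S t)⁻¹ with hSidef
  have hSic : ContinuousOn Si (Icc (0:ℝ) T) :=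
    continuousOn_inv_matrix hS.1 fun t ht => (hpos t ht).det_pos.ne'
  -- the continuous representative A1 of A'
  set A1 : ℝ → Matrix (Fin n) (Fin n) ℝ := fun t => G t * Si t with hA1def
  have hA1c : ContinuousOn A1 (Icc (0:ℝ) T) := continuousOn_matrix_mul hGW11.1 hSic
  have hA1eq : ∀ᵐ t ∂(volume.restrict (Icc (0:ℝ) T)), A1 t = A' t := by
    filter_upwards [hG, ae_restrict_mem measurableSet_Icc] with t h1 h2
    show G t * Si t = A' t
    rw [h1, Matrix.mul_assoc, hSSi t h2, Matrix.mul_one]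
  have hA1int : ∀ i j, IntegrableOn (fun t => A1 t i j) (Icc (0:ℝ) T) :=
    fun i j => (hA1c.matrix_entry i j).integrableOn_Icc
  have hAA1 : MAC T A A1 := hAW.congr_deriv hA1int
    (by filter_upwards [hA1eq] with t ht using ht.symm)
  -- the second weak derivative A2
  set A2 : ℝ → Matrix (Fin n) (Fin n) ℝ :=
    fun t => (G' t - A1 t * S' t) * Si t with hA2def
  have hA1S'int : ∀ i j, IntegrableOn (fun t => (A1 t * S' t) i j) (Icc (0:ℝ) T) :=
    integrableOn_cont_mul_matrix hA1c hSint
  have hDint : ∀ i j, IntegrableOn (fun t => (G' t - A1 t * S' t) i j) (Icc (0:ℝ) T) :=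
    fun i j => (hGW11.2.1 i j).sub (hA1S'int i j)
  have hA2int : ∀ i j, IntegrableOn (fun t => A2 t i j) (Icc (0:ℝ) T) :=
    integrableOn_matrix_mul_cont hDint hSic
  -- primitive of A2 starting at A1 0
  set P : ℝ → Matrix (Fin n) (Fin n) ℝ := mprim (A1 0) A2 with hPdef
  have hP : MAC T P A2 := MAC.mprim hA2int
  have hP0 : P 0 = A1 0 := by
    ext i j
    show A1 0 i j + ∫ s in (0:ℝ)..(0:ℝ), A2 s i j = A1 0 i j
    rw [intervalIntegral.integral_same, add_zero]
  have hPc : ContinuousOn P (Icc (0:ℝ) T) := continuousOn_matrix fun i j => (hP i j).1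
  -- the defect h := P*S - G and Gronwall setup
  have hhm : MAC T (fun t => P t * S t - G t)
      (fun t => A2 t * S t + P t * S' t - G' t) := (hP.mul hSW).sub hGW
  set ms : ℝ → Matrix (Fin n) (Fin n) ℝ := fun s => Si s * S' s with hmdef
  have hmint : ∀ i j, IntegrableOn (fun t => ms t i j) (Icc (0:ℝ) T) :=
    integrableOn_cont_mul_matrix hSic hSint
  set k : ℝ → ℝ := fun s => entSum (ms s) with hkdef
  have hkint : IntegrableOn k (Icc (0:ℝ) T) := by
    unfold k
    unfold entSum
    exact integrable_finset_sum _ fun i _ => integrable_finset_sum _ fun j _ =>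
      (hmint i j).abs
  have hk0 : ∀ s ∈ Icc (0:ℝ) T, 0 ≤ k s := fun s _ => entSum_nonneg _
  set hfn : ℝ → Matrix (Fin n) (Fin n) ℝ := fun t => P t * S t - G t with hhdef
  have hhc : ContinuousOn hfn (Icc (0:ℝ) T) :=
    (continuousOn_matrix_mul hPc hS.1).sub hGW11.1
  set Hf : ℝ → ℝ := fun t => entSum (hfn t) with hHdef
  have hH0 : ∀ t ∈ Icc (0:ℝ) T, 0 ≤ Hf t := fun t _ => entSum_nonneg _
  have hHc : ContinuousOn Hf (Icc (0:ℝ) T) := continuousOn_entSum hhc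
  have hh0 : hfn 0 = 0 := by
    show P 0 * S 0 - G 0 = 0
    rw [hP0]
    show G 0 * Si 0 * S 0 - G 0 = 0
    rw [Matrix.mul_assoc, hSiS 0 h0T, Matrix.mul_one, sub_self]
  have hkey : ∀ s ∈ Icc (0:ℝ) T,
      A2 s * S s + P s * S' s - G' s = hfn s * ms s := by
    intro s hs
    have h1 : A2 s * S s = G' s - A1 s * S' s := by
      show (G' s - A1 s * S' s) * Si s * S s = G' s - A1 s * S' s
      rw [Matrix.mul_assoc, hSiS s hs, Matrix.mul_one]
    have h2 : hfn s * Si s = P s - A1 s := by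
      show (P s * S s - G s) * Si s = P s - A1 s
      rw [Matrix.sub_mul, Matrix.mul_assoc, hSSi s hs, Matrix.mul_one]
    calc A2 s * S s + P s * S' s - G' s = (P s - A1 s) * S' s := by
          rw [h1, Matrix.sub_mul]; abel
      _ = (hfn s * Si s) * S' s := by rw [h2]
      _ = hfn s * ms s := by rw [Matrix.mul_assoc]
  -- Gronwall inequality
  have hineq : ∀ t ∈ Icc (0:ℝ) T, Hf t ≤ ∫ s in Ioc (0:ℝ) t, k s * Hf s := by
    intro t ht
    have hd_int : ∀ i j : Fin n, IntegrableOn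
        (fun s => (A2 s * S s + P s * S' s - G' s) i j) (Ioc (0:ℝ) t) :=
      fun i j => ((hhm i j).2.1).mono_set (ACl.sub_Ioc ht)
    have hent : ∀ i j : Fin n, hfn t i j
        = ∫ s in Ioc (0:ℝ) t, (A2 s * S s + P s * S' s - G' s) i j := by
      intro i j
      have h1 := (hhm i j).2.2 t ht
      rw [intervalIntegral.integral_of_le ht.1] at h1
      have h2 : hfn 0 i j = 0 := by rw [hh0]; rfl
      have h1' : hfn t i j = hfn 0 i j
          + ∫ s in Ioc (0:ℝ) t, (A2 s * S s + P s * S' s - G' s) i j := h1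
      rw [h2, zero_add] at h1'
      exact h1'
    have step1 : Hf t ≤ ∑ i, ∑ j,
        ∫ s in Ioc (0:ℝ) t, |(A2 s * S s + P s * S' s - G' s) i j| := by
      refine Finset.sum_le_sum fun i _ => Finset.sum_le_sum fun j _ => ?_
      rw [hent i j]
      have := norm_integral_le_integral_norm
        (μ := volume.restrict (Ioc (0:ℝ) t))
        (f := fun s => (A2 s * S s + P s * S' s - G' s) i j)
      simpa [Real.norm_eq_abs] using this
    have step2 : (∑ i, ∑ j,
        ∫ s in Ioc (0:ℝ) t, |(A2 s * S s + P s * S' s - G' s) i j|)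
        = ∫ s in Ioc (0:ℝ) t, ∑ i, ∑ j,
          |(A2 s * S s + P s * S' s - G' s) i j| := by
      rw [integral_finset_sum _ fun i _ => integrable_finset_sum _ fun j _ =>
        (hd_int i j).abs]
      exact Finset.sum_congr rfl fun i _ =>
        (integral_finset_sum _ fun j _ => (hd_int i j).abs).symm
    have hkH_int : IntegrableOn (fun s => k s * Hf s) (Icc (0:ℝ) T) := by
      obtain ⟨CH, hCH⟩ := isCompact_Icc.exists_bound_of_continuousOn hHc
      refine (hkint.bdd_mul (c := CH)
        (hHc.aestronglyMeasurable measurableSet_Icc) ?_).congr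
        (Filter.Eventually.of_forall fun y => mul_comm _ _)
      filter_upwards [ae_restrict_mem measurableSet_Icc] with x hx using hCH x hx
    have step3 : (∫ s in Ioc (0:ℝ) t, ∑ i, ∑ j,
          |(A2 s * S s + P s * S' s - G' s) i j|)
        ≤ ∫ s in Ioc (0:ℝ) t, k s * Hf s := by
      refine setIntegral_mono_on
        (integrable_finset_sum _ fun i _ => integrable_finset_sum _ fun j _ =>
          (hd_int i j).abs)
        (hkH_int.mono_set (ACl.sub_Ioc ht)) measurableSet_Ioc ?_
      intro s hs
      have hs' : s ∈ Icc (0:ℝ) T := ACl.sub_Ioc ht hs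
      have : (∑ i, ∑ j, |(A2 s * S s + P s * S' s - G' s) i j|)
          = entSum (hfn s * ms s) := by
        rw [← hkey s hs']; rfl
      rw [this]
      calc entSum (hfn s * ms s) ≤ entSum (hfn s) * entSum (ms s) :=
            entSum_mul_le _ _
        _ = k s * Hf s := mul_comm _ _
    calc Hf t ≤ _ := step1
      _ = _ := step2
      _ ≤ _ := step3
  have hzero := gronwall_zero hkint hk0 hHc hH0 hineq
  have hPA1 : ∀ t ∈ Icc (0:ℝ) T, P t = A1 t := by
    intro t ht
    have hht : hfn t = 0 := eq_zero_of_entSum _ (hzero t ht)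
    have hPS : P t * S t = G t := by
      have h2 : P t * S t - G t = 0 := hht
      exact sub_eq_zero.1 h2
    calc P t = P t * (S t * Si t) := by rw [hSSi t ht, Matrix.mul_one]
      _ = (P t * S t) * Si t := by rw [Matrix.mul_assoc]
      _ = G t * Si t := by rw [hPS]
      _ = A1 t := rfl
  -- A1 is W^{1,1} with derivative A2
  have hA1mac : MAC T A1 A2 := by
    intro i j
    refine ⟨hA1c.matrix_entry i j, hA2int i j, fun t ht => ?_⟩
    calc A1 t i j = P t i j := by rw [hPA1 t ht]
      _ = A1 0 i j + ∫ s in (0:ℝ)..t, A2 s i j := rfl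
  -- the S part
  set S1 : ℝ → Matrix (Fin n) (Fin n) ℝ :=
    fun t => A t * S t + S t * (A t)ᵀ + B * Bᵀ with hS1def
  have hS1c : ContinuousOn S1 (Icc (0:ℝ) T) :=
    ((continuousOn_matrix_mul hA.1 hS.1).add
      (continuousOn_matrix_mul hS.1 (continuousOn_matrix_transpose hA.1))).add
      continuousOn_const
  have hS1int : ∀ i j, IntegrableOn (fun t => S1 t i j) (Icc (0:ℝ) T) :=
    fun i j => (hS1c.matrix_entry i j).integrableOn_Icc
  have hSS1 : MAC T S S1 := hSW.congr_deriv hS1int hdyn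
  have hAt : MAC T (fun t => (A t)ᵀ) (fun t => (A1 t)ᵀ) := hAA1.transpose
  have hS1mac : MAC T S1
      (fun t => (A1 t * S t + A t * S1 t) + (S1 t * (A t)ᵀ + S t * (A1 t)ᵀ)
        + (0 : Matrix (Fin n) (Fin n) ℝ)) :=
    ((hAA1.mul hSS1).add (hSS1.mul hAt)).add (MAC.const (B * Bᵀ))
  set S2 : ℝ → Matrix (Fin n) (Fin n) ℝ :=
    fun t => (A1 t * S t + A t * S1 t) + (S1 t * (A t)ᵀ + S t * (A1 t)ᵀ)
      + (0 : Matrix (Fin n) (Fin n) ℝ) with hS2def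
  have hA1tc : ContinuousOn (fun t => (A1 t)ᵀ) (Icc (0:ℝ) T) :=
    continuousOn_matrix_transpose hA1c
  have hS2c : ContinuousOn S2 (Icc (0:ℝ) T) :=
    (((continuousOn_matrix_mul hA1c hS.1).add
        (continuousOn_matrix_mul hA.1 hS1c)).add
      ((continuousOn_matrix_mul hS1c (continuousOn_matrix_transpose hA.1)).add
        (continuousOn_matrix_mul hS.1 hA1tc))).add continuousOn_const
  have hS2mac : MAC T S2
      (fun t => ((A2 t * S t + A1 t * S1 t) + (A1 t * S1 t + A t * S2 t))
        + ((S2 t * (A t)ᵀ + S1 t * (A1 t)ᵀ) + (S1 t * (A1 t)ᵀ + S t * (A2 t)ᵀ))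
        + (0 : Matrix (Fin n) (Fin n) ℝ)) :=
    (((hA1mac.mul hSS1).add (hAA1.mul hS1mac)).add
      ((hS1mac.mul hAt).add (hSS1.mul hA1mac.transpose))).add
      (MAC.const (0 : Matrix (Fin n) (Fin n) ℝ))
  refine ⟨⟨A1, A2, hA1eq, hAA1.isW11, hA1mac.isW11, fun i j => ?_⟩,
    ⟨S1, S2, _, (by filter_upwards [hdyn] with t ht using ht.symm),
      hSS1.isW11, hS1mac.isW11, hS2mac.isW11, fun i j => ?_⟩⟩
  · exact c1_of_prim hT0 (hA1c.matrix_entry i j) fun t ht => (hAA1 i j).2.2 t ht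
  · exact c2_of_prim hT0 (hS2c.matrix_entry i j)
      (fun t ht => (hS1mac i j).2.2 t ht) (fun t ht => (hSS1 i j).2.2 t ht)
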